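/- For the implicit discretization with a ≥ 0 and Δt > 0: z_n = S(z_{n-1} − Δt·a·y_{n-1}), y_n = y_{n-1} + Δt·z_n with S = 1/(1+Δt²a) and zero input, the energy E(y,z) = a y² + z² is non-increasing: E(y_n, z_n) ≤ E(y_{n-1}, z_{n-1}). -/

import Mathlib

theorem stmt13 (a Δt S : ℝ) (ha : 0 ≤ a) (hΔt : 0 < Δt)
    (hS : S = 1 / (1 + Δt ^ 2 * a))
    (y z : ℕ → ℝ)
    (hz : ∀ n, z (n + 1) = S * (z n - Δt * a * y n))
    (hy : ∀ n, y (n + 1) = y n + Δt * z (n + 1))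
    (E : ℝ → ℝ → ℝ) (hE : ∀ Y Z, E Y Z = a * Y ^ 2 + Z ^ 2) :
    ∀ n, E (y (n + 1)) (z (n + 1)) ≤ E (y n) (z n) := by
  intro n
  have hd : (0:ℝ) < 1 + Δt ^ 2 * a := by nlinarith
  rw [hE, hE, hy n, hz n, hS]
  rw [div_mul_eq_mul_div, one_mul]
  rw [div_pow, ← sub_nonneg]
  have hd2 : (0:ℝ) < (1 + Δt ^ 2 * a) ^ 2 := by positivity
  field_simp
  suffices h : 0 ≤ (a * y n ^ 2 + z n ^ 2) * (1 + Δt ^ 2 * a) ^ 2 -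
      (a * (y n * (1 + Δt ^ 2 * a) + Δt * (z n - Δt * a * y n)) ^ 2 + (z n - Δt * a * y n) ^ 2) by
    rw [zero_mul]; linarith
  have key : (a * y n ^ 2 + z n ^ 2) * (1 + Δt ^ 2 * a) ^ 2 -
      (a * (y n * (1 + Δt ^ 2 * a) + Δt * (z n - Δt * a * y n)) ^ 2 + (z n - Δt * a * y n) ^ 2)
      = (a * y n ^ 2 + z n ^ 2) * (1 + Δt ^ 2 * a) * (Δt ^ 2 * a) := by ring
  rw [key]
  positivity
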